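/- Let p be an odd prime and k > 2 an integer, let n = p^k, and let G be the cyclic subgroup of (Z_n)^× generated by the unit e = p^{k−1} − 1. Then for every α ∈ Z_n, the cardinality of the coset αG = {α·g : g ∈ G} equals 1 if α = 0, equals 2 if α ≠ 0 and p divides α, and equals 2p if p does not divide α. -/

import Mathlib

/-- The coset (orbit) `xG = {x * g : g ∈ G}` of `x : R` under a subgroup `G` of `Rˣ`. -/
def coset {R : Type*} [Monoid R] (G : Subgroup Rˣ) (x : R) : Set R :=
  {y | ∃ g ∈ G, y = x * (g : R)}

theorem stmt_12 (p : ℕ) (hp : p.Prime) (hodd : p ≠ 2) (k : ℕ) (hk : 2 < k)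
    (e : (ZMod (p ^ k))ˣ)
    (he : (e : ZMod (p ^ k)) = (p : ZMod (p ^ k)) ^ (k - 1) - 1) :
    ∀ α : ZMod (p ^ k),
      (α = 0 → (coset (Subgroup.zpowers e) α).ncard = 1) ∧
      (α ≠ 0 → (p : ZMod (p ^ k)) ∣ α → (coset (Subgroup.zpowers e) α).ncard = 2) ∧
      (¬ (p : ZMod (p ^ k)) ∣ α → (coset (Subgroup.zpowers e) α).ncard = 2 * p) := by
  haveI : Fact p.Prime := ⟨hp⟩
  haveI : NeZero (p ^ k) := ⟨pow_ne_zero k hp.pos.ne'⟩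
  obtain ⟨t, ht⟩ : ∃ t : ZMod (p ^ k), t = (p : ZMod (p ^ k)) ^ (k - 1) := ⟨_, rfl⟩
  rw [← ht] at he
  have hpk0 : (p : ZMod (p ^ k)) ^ k = 0 := by
    rw [← Nat.cast_pow, ZMod.natCast_self]
  have htsq : t * t = 0 := by
    have h1 : t * t = (p : ZMod (p ^ k)) ^ k * (p : ZMod (p ^ k)) ^ (k - 2) := by
      rw [ht, ← pow_add, ← pow_add]; congr 1; omega
    rw [h1, hpk0, zero_mul]
  have hpt : (p : ZMod (p ^ k)) * t = 0 := by
    have h1 : (p : ZMod (p ^ k)) * t = (p : ZMod (p ^ k)) ^ k := by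
      rw [ht, ← pow_succ']; congr 1; omega
    rw [h1, hpk0]
  have hp3 : 3 ≤ p := by have := hp.two_le; omega
  have hnlt : 2 < p ^ k := by
    have : p ^ 1 ≤ p ^ k := Nat.pow_le_pow_right hp.pos (by omega)
    simp only [pow_one] at this; omega
  have h2unit : IsUnit (2 : ZMod (p ^ k)) := by
    have : IsUnit ((2 : ℕ) : ZMod (p ^ k)) := by
      rw [ZMod.isUnit_iff_coprime]
      exact ((Nat.coprime_primes Nat.prime_two hp).mpr (Ne.symm hodd)).pow_right k
    simpa using this
  have htwo_cancel : ∀ x : ZMod (p ^ k), 2 * x = 0 → x = 0 := by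
    intro x hx
    exact h2unit.mul_left_cancel (by rw [hx, mul_zero])
  have ht0 : t ≠ 0 := by
    rw [ht, ← Nat.cast_pow, Ne, ZMod.natCast_eq_zero_iff]
    intro h
    have h1 := Nat.le_of_dvd (Nat.pow_pos hp.pos) h
    have h2 := Nat.pow_lt_pow_right hp.one_lt (show k - 1 < k by omega)
    omega
  have hne11 : (-1 : ZMod (p ^ k)) ≠ 1 := by
    intro h
    have h2 : ((2 : ℕ) : ZMod (p ^ k)) = 0 := by push_cast; linear_combination -h
    rw [ZMod.natCast_eq_zero_iff] at h2
    have := Nat.le_of_dvd (by norm_num) h2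
    omega
  have he2 : ((e ^ 2 : (ZMod (p ^ k))ˣ) : ZMod (p ^ k)) = 1 - 2 * t := by
    push_cast [he]
    linear_combination htsq
  have hpow : ∀ m : ℕ,
      (((e ^ 2) ^ m : (ZMod (p ^ k))ˣ) : ZMod (p ^ k)) = 1 - 2 * (m : ZMod (p ^ k)) * t := by
    intro m
    induction m with
    | zero => simp
    | succ m ih =>
      have h1 : (((e ^ 2) ^ (m + 1) : (ZMod (p ^ k))ˣ) : ZMod (p ^ k))
          = (((e ^ 2) ^ m : (ZMod (p ^ k))ˣ) : ZMod (p ^ k))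
            * ((e ^ 2 : (ZMod (p ^ k))ˣ) : ZMod (p ^ k)) := by
        rw [pow_succ]; push_cast; ring
      rw [h1, ih, he2]
      push_cast
      linear_combination (4 * (m : ZMod (p ^ k))) * htsq
  obtain ⟨m, hm⟩ : Odd p := hp.odd_of_ne_two hodd
  have hmcast : (p : ZMod (p ^ k)) = 2 * (m : ZMod (p ^ k)) + 1 := by
    rw [hm]; push_cast; ring
  have hep : ((e ^ p : (ZMod (p ^ k))ˣ) : ZMod (p ^ k)) = -1 := by
    have h1 : e ^ p = (e ^ 2) ^ m * e := by
      rw [← pow_mul, ← pow_succ]; congr 1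
    rw [h1]
    push_cast [hpow m, he]
    linear_combination (-2 * (m : ZMod (p ^ k))) * htsq + hpt + (-t) * hmcast
  have he2p : e ^ (2 * p) = 1 := by
    apply Units.ext
    have h1 : e ^ (2 * p) = (e ^ 2) ^ p := by rw [← pow_mul]
    rw [h1]
    push_cast [hpow p]
    linear_combination -2 * hpt
  have horder : orderOf e = 2 * p := by
    apply orderOf_eq_of_pow_and_pow_div_prime (by positivity) he2p
    intro q hq hqdvd
    have hq2p : q = 2 ∨ q = p := by
      rcases (Nat.Prime.dvd_mul hq).mp hqdvd with h | h
      · left; exact (Nat.prime_dvd_prime_iff_eq hq Nat.prime_two).mp h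
      · right; exact (Nat.prime_dvd_prime_iff_eq hq hp).mp h
    rcases hq2p with h | h
    · rw [h, show 2 * p / 2 = p by omega]
      intro hcon
      apply hne11
      rw [← hep, hcon, Units.val_one]
    · rw [h, Nat.mul_div_cancel (m := 2) hp.pos]
      intro hcon
      have h2 : (1 : ZMod (p ^ k)) - 2 * t = 1 := by rw [← he2, hcon, Units.val_one]
      have h3 : 2 * t = 0 := by linear_combination -h2
      exact ht0 (htwo_cancel t h3)
  intro α
  refine ⟨?_, ?_, ?_⟩
  · rintro rfl
    have h0 : coset (Subgroup.zpowers e) (0 : ZMod (p ^ k)) = {0} := by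
      ext y
      simp only [coset, Set.mem_setOf_eq, Set.mem_singleton_iff]
      constructor
      · rintro ⟨g, _, rfl⟩; ring
      · rintro rfl; exact ⟨1, Subgroup.one_mem _, by simp⟩
    rw [h0, Set.ncard_singleton]
  · rintro hα0 ⟨β, hβ⟩
    have hαt : α * t = 0 := by
      rw [hβ]; linear_combination β * hpt
    have hstep : ∀ x : ZMod (p ^ k), x * t = 0 → x * (e : ZMod (p ^ k)) = -x := by
      intro x hx
      rw [he]
      linear_combination hx
    have hmem : ∀ g ∈ Subgroup.zpowers e,
        α * (g : ZMod (p ^ k)) = α ∨ α * (g : ZMod (p ^ k)) = -α := by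
      intro g hg
      rw [← mem_powers_iff_mem_zpowers] at hg
      obtain ⟨j, rfl⟩ := hg
      induction j with
      | zero => left; simp
      | succ j ih =>
        have h1 : α * ((e ^ (j + 1) : (ZMod (p ^ k))ˣ) : ZMod (p ^ k))
            = (α * ((e ^ j : (ZMod (p ^ k))ˣ) : ZMod (p ^ k))) * (e : ZMod (p ^ k)) := by
          rw [pow_succ]; push_cast; ring
        rcases ih with h | h
        · right; rw [h1, h, hstep α hαt]
        · left
          rw [h1, h, hstep (-α) (by linear_combination -hαt)]
          ring
    have hcoset : coset (Subgroup.zpowers e) α = {α, -α} := by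
      ext y
      simp only [coset, Set.mem_setOf_eq, Set.mem_insert_iff, Set.mem_singleton_iff]
      constructor
      · rintro ⟨g, hg, rfl⟩
        exact hmem g hg
      · rintro (rfl | rfl)
        · exact ⟨1, Subgroup.one_mem _, by simp⟩
        · exact ⟨e, Subgroup.mem_zpowers e, (hstep α hαt).symm⟩
    rw [hcoset]
    apply Set.ncard_pair
    intro h
    apply hα0
    apply htwo_cancel
    linear_combination h
  · intro hdvd
    have hαu : IsUnit α := by
      have hval : ((α.val : ℕ) : ZMod (p ^ k)) = α := by
        simp [ZMod.natCast_val, ZMod.cast_id]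
      have hpnd : ¬ p ∣ α.val := by
        rintro ⟨c, hc⟩
        apply hdvd
        refine ⟨(c : ZMod (p ^ k)), ?_⟩
        rw [← hval, hc]; push_cast; ring
      rw [← hval, ZMod.isUnit_iff_coprime]
      exact (hp.coprime_iff_not_dvd.mpr hpnd).symm.pow_right k
    have himg : coset (Subgroup.zpowers e) α
        = (fun u : (ZMod (p ^ k))ˣ => α * (u : ZMod (p ^ k)))
            '' (Subgroup.zpowers e : Set (ZMod (p ^ k))ˣ) := by
      ext y
      simp only [coset, Set.mem_setOf_eq, Set.mem_image, SetLike.mem_coe]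
      constructor
      · rintro ⟨g, hg, rfl⟩; exact ⟨g, hg, rfl⟩
      · rintro ⟨g, hg, rfl⟩; exact ⟨g, hg, rfl⟩
    rw [himg]
    rw [Set.ncard_image_of_injective _ (fun u v huv => ?_)]
    · rw [← Nat.card_coe_set_eq]
      simpa using (Nat.card_zpowers e).trans horder
    · exact Units.ext (hαu.mul_left_cancel (by simpa using huv))
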